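/- With S = w + z, P = (1/2)wz - 1, and φ(x,z) = z²/2 + (1 - xz)/(x² + 1/2), the identity ∂/∂x [ ((2xP - S)/(2x² + 1)) · e^{x(S - x)} ] = -( φ(x,w)·φ(x,z) - P² - 1 ) · e^{x(S-x)} holds for all real x, w, z. -/

import Mathlib

/-- With `S = w + z`, `P = wz/2 - 1`, `φ(x,z) = z²/2 + (1-xz)/(x²+1/2)`, one has
`∂ₓ [((2xP - S)/(2x²+1)) e^{x(S-x)}] = -(φ(x,w)φ(x,z) - P² - 1) e^{x(S-x)}`. -/
theorem stmt_10 (w z : ℝ) (φ : ℝ → ℝ → ℝ)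
    (hφ : ∀ x z : ℝ, φ x z = z ^ 2 / 2 + (1 - x * z) / (x ^ 2 + 1 / 2)) :
    ∀ x : ℝ,
      HasDerivAt
        (fun x : ℝ => ((2 * x * ((1 / 2) * w * z - 1) - (w + z)) / (2 * x ^ 2 + 1)) *
          Real.exp (x * ((w + z) - x)))
        (-(φ x w * φ x z - ((1 / 2) * w * z - 1) ^ 2 - 1) *
          Real.exp (x * ((w + z) - x))) x := by
  intro x
  have hg0 : (2 * x ^ 2 + 1 : ℝ) ≠ 0 := by positivity
  have h0 : (x ^ 2 + 1 / 2 : ℝ) ≠ 0 := by positivity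
  have hf : HasDerivAt (fun x : ℝ => 2 * x * ((1 / 2) * w * z - 1) - (w + z))
      (2 * ((1 / 2) * w * z - 1)) x := by
    simpa using (((hasDerivAt_id x).const_mul 2).mul_const ((1 / 2) * w * z - 1)).sub_const (w + z)
  have hg : HasDerivAt (fun x : ℝ => 2 * x ^ 2 + 1) (4 * x) x := by
    have := ((hasDerivAt_pow 2 x).const_mul 2).add_const 1
    refine this.congr_deriv ?_
    norm_num
    ring
  have he : HasDerivAt (fun x : ℝ => Real.exp (x * ((w + z) - x)))
      (((w + z) - 2 * x) * Real.exp (x * ((w + z) - x))) x := by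
    have hi : HasDerivAt (fun x : ℝ => x * ((w + z) - x)) ((w + z) - 2 * x) x := by
      have := (hasDerivAt_id x).mul ((hasDerivAt_const x (w + z)).sub (hasDerivAt_id x))
      refine this.congr_deriv ?_
      simp [id]
      ring
    simpa [mul_comm] using hi.exp
  have := (hf.div hg hg0).mul he
  refine this.congr_deriv ?_
  rw [hφ, hφ]
  simp only [Pi.div_apply]
  field_simp
  ring
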